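/- Variance lower bound for the empirical NWJ estimator at the optimal critic: with f(x,y) = 1 + log(p(x,y)/(p(x)p(y))), the estimator Î_NWJ = (1/N)∑ᵢ f(xᵢ,yᵢ) − (e^{−1}/N)∑ᵢ e^{f(x̄ᵢ,ȳᵢ)}, where (xᵢ,yᵢ) ∼ p(x,y) i.i.d. and independently (x̄ᵢ,ȳᵢ) ∼ p(x)p(y) i.i.d., satisfies Var(Î_NWJ) ≥ (e^{I(X;Y)} − 1)/N. -/
import Mathlib

open Finset

lemma sum_fun_prod {α : Type*} [Fintype α] {N : ℕ} (g : Fin N → α → ℝ) :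
    ∑ t : Fin N → α, ∏ j, g j (t j) = ∏ j, ∑ a, g j a := by
  rw [Finset.prod_univ_sum, Fintype.piFinset_univ]

lemma sum_prod_single {α : Type*} [Fintype α] [DecidableEq α] {N : ℕ} (q h : α → ℝ)
    (hq : ∑ a, q a = 1) (i : Fin N) :
    ∑ t : Fin N → α, (∏ j, q (t j)) * h (t i) = ∑ a, q a * h a := by
  have e1 : ∀ t : Fin N → α, (∏ j, q (t j)) * h (t i)
      = ∏ j, (if j = i then q (t j) * h (t j) else q (t j)) := by
    intro t
    have er : (∏ j ∈ Finset.univ.erase i,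
        (if j = i then q (t j) * h (t j) else q (t j))) = ∏ j ∈ Finset.univ.erase i, q (t j) :=
      Finset.prod_congr rfl (fun j hj => if_neg (Finset.ne_of_mem_erase hj))
    rw [← Finset.prod_erase_mul _ _ (Finset.mem_univ i),
        ← Finset.prod_erase_mul _ (fun j => if j = i then q (t j) * h (t j) else q (t j))
          (Finset.mem_univ i), if_pos rfl, er]
    ring
  simp_rw [e1]
  rw [sum_fun_prod (fun j a => if j = i then q a * h a else q a)]
  have e2 : ∀ j : Fin N, (∑ a, if j = i then q a * h a else q a)
      = if j = i then (∑ a, q a * h a) else 1 := by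
    intro j
    by_cases hji : j = i <;> simp [hji, hq]
  simp_rw [e2]
  rw [Finset.prod_ite_eq' Finset.univ i (fun _ => ∑ a, q a * h a)]
  simp

lemma sum_prod_double {α : Type*} [Fintype α] [DecidableEq α] {N : ℕ} (q h : α → ℝ)
    (hq : ∑ a, q a = 1) {i j : Fin N} (hij : i ≠ j) :
    ∑ t : Fin N → α, (∏ k, q (t k)) * (h (t i) * h (t j)) = (∑ a, q a * h a) ^ 2 := by
  have hji : j ∈ Finset.univ.erase i := Finset.mem_erase.2 ⟨hij.symm, Finset.mem_univ j⟩
  have e1 : ∀ t : Fin N → α, (∏ k, q (t k)) * (h (t i) * h (t j))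
      = ∏ k, (if k = i then q (t k) * h (t k) else
          if k = j then q (t k) * h (t k) else q (t k)) := by
    intro t
    have er : (∏ k ∈ (Finset.univ.erase i).erase j, (if k = i then q (t k) * h (t k) else
        if k = j then q (t k) * h (t k) else q (t k)))
        = ∏ k ∈ (Finset.univ.erase i).erase j, q (t k) :=
      Finset.prod_congr rfl (fun k hk => by
        rw [if_neg (Finset.ne_of_mem_erase (Finset.mem_of_mem_erase hk)),
            if_neg (Finset.ne_of_mem_erase hk)])
    rw [← Finset.prod_erase_mul _ _ (Finset.mem_univ i),
        ← Finset.prod_erase_mul _ _ hji,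
        ← Finset.prod_erase_mul _ (fun k => if k = i then q (t k) * h (t k) else
          if k = j then q (t k) * h (t k) else q (t k)) (Finset.mem_univ i),
        ← Finset.prod_erase_mul _ (fun k => if k = i then q (t k) * h (t k) else
          if k = j then q (t k) * h (t k) else q (t k)) hji,
        if_pos rfl, if_neg hij.symm, if_pos rfl, er]
    ring
  simp_rw [e1]
  rw [sum_fun_prod (fun k a => if k = i then q a * h a else
    if k = j then q a * h a else q a)]
  have e2 : ∀ k : Fin N, (∑ a, if k = i then q a * h a else
      if k = j then q a * h a else q a)
      = if k = i then (∑ a, q a * h a) else if k = j then (∑ a, q a * h a) else 1 := by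
    intro k
    by_cases hki : k = i
    · simp [hki]
    · by_cases hkj : k = j <;> simp [hki, hkj, hq]
  simp_rw [e2]
  have er : (∏ k ∈ (Finset.univ.erase i).erase j, (if k = i then (∑ a, q a * h a) else
      if k = j then (∑ a, q a * h a) else 1)) = ∏ k ∈ (Finset.univ.erase i).erase j, (1:ℝ) :=
    Finset.prod_congr rfl (fun k hk => by
      rw [if_neg (Finset.ne_of_mem_erase (Finset.mem_of_mem_erase hk)),
          if_neg (Finset.ne_of_mem_erase hk)])
  rw [← Finset.prod_erase_mul _ _ (Finset.mem_univ i), ← Finset.prod_erase_mul _ _ hji,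
      if_pos rfl, if_neg hij.symm, if_pos rfl, er]
  simp [sq]



/-- Variance lower bound for the empirical NWJ estimator at the optimal
critic `f(x,y) = 1 + log(p(x,y)/(p(x)p(y)))`: with `N` i.i.d. samples from `p(x,y)`
and `N` independent i.i.d. samples from `p(x)p(y)`,
`Var(Î_NWJ) ≥ (e^{I(X;Y)} - 1)/N`. The variance is taken over the joint sampling
distribution `P` on pairs of samples, and `T` is the empirical NWJ estimator. -/
theorem nwj_variance_lower_bound
    {𝓧 𝓨 : Type*} [Fintype 𝓧] [Fintype 𝓨] [DecidableEq 𝓧] [DecidableEq 𝓨]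
    (p : 𝓧 → 𝓨 → ℝ) (hp : ∀ x y, 0 < p x y) (hsum : ∑ x, ∑ y, p x y = 1)
    (z : 𝓧 → 𝓨 → ℝ)
    (hz : ∀ x y, z x y = p x y / ((∑ y', p x y') * (∑ x', p x' y)))
    (f : 𝓧 → 𝓨 → ℝ) (hf : ∀ x y, f x y = 1 + Real.log (z x y))
    (I : ℝ) (hI : I = ∑ x, ∑ y, p x y * Real.log (z x y))
    (N : ℕ) (hN : 0 < N)
    (P : ((Fin N → 𝓧 × 𝓨) × (Fin N → 𝓧 × 𝓨)) → ℝ)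
    (hP : ∀ s, P s = (∏ i, p (s.1 i).1 (s.1 i).2) *
        ∏ i, (∑ y', p (s.2 i).1 y') * (∑ x', p x' (s.2 i).2))
    (T : ((Fin N → 𝓧 × 𝓨) × (Fin N → 𝓧 × 𝓨)) → ℝ)
    (hT : ∀ s, T s = (N : ℝ)⁻¹ * (∑ i, f (s.1 i).1 (s.1 i).2)
        - Real.exp (-1) * ((N : ℝ)⁻¹ * ∑ i, Real.exp (f (s.2 i).1 (s.2 i).2))) :
    (Real.exp I - 1) / N ≤
      (∑ s, P s * T s ^ 2) - (∑ s, P s * T s) ^ 2 := by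
  have hn : (0:ℝ) < (N : ℝ) := by exact_mod_cast hN
  have hX : Nonempty 𝓧 := by
    rcases isEmpty_or_nonempty 𝓧 with h | h
    · simp at hsum
    · exact h
  have hY : Nonempty 𝓨 := by
    rcases isEmpty_or_nonempty 𝓨 with h | h
    · simp at hsum
    · exact h
  set Q : 𝓧 × 𝓨 → ℝ := fun a => (∑ y', p a.1 y') * (∑ x', p x' a.2) with hQdef
  set Pp : 𝓧 × 𝓨 → ℝ := fun a => p a.1 a.2 with hPpdef
  set zz : 𝓧 × 𝓨 → ℝ := fun a => z a.1 a.2 with hzzdef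
  have hQpos : ∀ a, 0 < Q a := fun a =>
    mul_pos (Finset.sum_pos (fun y _ => hp a.1 y) Finset.univ_nonempty)
      (Finset.sum_pos (fun x _ => hp x a.2) Finset.univ_nonempty)
  have hzq : ∀ a, zz a = Pp a / Q a := fun a => hz a.1 a.2
  have hQz : ∀ a, Q a * zz a = Pp a := fun a => by
    rw [hzq a, mul_div_cancel₀ _ (ne_of_gt (hQpos a))]
  have hzpos : ∀ a, 0 < zz a := fun a => by
    rw [hzq a]; exact div_pos (hp a.1 a.2) (hQpos a)
  have hp1 : ∑ a, Pp a = 1 := by rw [Fintype.sum_prod_type]; exact hsum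
  have hq1 : ∑ a, Q a = 1 := by
    rw [Fintype.sum_prod_type]
    rw [show (∑ x, ∑ y, Q (x, y))
        = ∑ x, ∑ y, (fun x => ∑ y', p x y') x * (fun y => ∑ x', p x' y) y from rfl]
    rw [← Finset.sum_mul_sum Finset.univ Finset.univ
        (fun x => ∑ y', p x y') (fun y => ∑ x', p x' y)]
    rw [hsum, Finset.sum_comm, hsum, one_mul]
  have hS : ∑ a, Q a * zz a = 1 := by simp_rw [hQz]; exact hp1
  set Ez : ℝ := ∑ a, Pp a * zz a with hEzdef
  -- Jensen
  have hIeq : I = ∑ a : 𝓧 × 𝓨, Pp a * Real.log (zz a) := by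
    rw [hI, Fintype.sum_prod_type]
  have hJensen : Real.exp I ≤ Ez := by
    have h := convexOn_exp.map_sum_le (t := Finset.univ) (w := Pp)
      (p := fun a => Real.log (zz a))
      (fun a _ => (hp a.1 a.2).le) hp1 (fun a _ => Set.mem_univ _)
    simp only [smul_eq_mul] at h
    rw [hIeq]
    calc Real.exp (∑ a, Pp a * Real.log (zz a))
        ≤ ∑ a, Pp a * Real.exp (Real.log (zz a)) := h
      _ = Ez := Finset.sum_congr rfl fun a _ => by rw [Real.exp_log (hzpos a)]
  -- estimator decomposition
  set A : (Fin N → 𝓧 × 𝓨) → ℝ := fun u => (N : ℝ)⁻¹ * ∑ i, f (u i).1 (u i).2 with hAdef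
  set B : (Fin N → 𝓧 × 𝓨) → ℝ := fun v => (N : ℝ)⁻¹ * ∑ i, zz (v i) with hBdef
  have hTAB : ∀ s, T s = A s.1 - B s.2 := by
    intro s
    rw [hT s]
    have step : ∀ a : 𝓧 × 𝓨, Real.exp (-1) * Real.exp (f a.1 a.2) = zz a := by
      intro a
      rw [← Real.exp_add, hf]
      rw [show (-1 + (1 + Real.log (z a.1 a.2))) = Real.log (zz a) by
        rw [hzzdef]; ring]
      exact Real.exp_log (hzpos a)
    have h2 : Real.exp (-1) * ((N : ℝ)⁻¹ * ∑ i, Real.exp (f (s.2 i).1 (s.2 i).2))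
        = B s.2 := by
      calc Real.exp (-1) * ((N : ℝ)⁻¹ * ∑ i, Real.exp (f (s.2 i).1 (s.2 i).2))
          = (N : ℝ)⁻¹ * ∑ i, Real.exp (-1) * Real.exp (f (s.2 i).1 (s.2 i).2) := by
            simp_rw [Finset.mul_sum]
            exact Finset.sum_congr rfl fun i _ => by ring
        _ = (N : ℝ)⁻¹ * ∑ i, zz (s.2 i) := by
            congr 1
            exact Finset.sum_congr rfl fun i _ => step (s.2 i)
        _ = B s.2 := rfl
    rw [h2, hAdef]
  set P1 : (Fin N → 𝓧 × 𝓨) → ℝ := fun u => ∏ i, Pp (u i) with hP1def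
  set P2 : (Fin N → 𝓧 × 𝓨) → ℝ := fun v => ∏ i, Q (v i) with hP2def
  have hPprod : ∀ s, P s = P1 s.1 * P2 s.2 := fun s => hP s
  have hP1nn : ∀ u, 0 ≤ P1 u := fun u => Finset.prod_nonneg fun i _ => (hp _ _).le
  have hSP1 : ∑ u, P1 u = 1 := by
    rw [hP1def]
    rw [sum_fun_prod (fun _ : Fin N => Pp)]
    simp [hp1]
  have hSP2 : ∑ v, P2 v = 1 := by
    rw [hP2def]
    rw [sum_fun_prod (fun _ : Fin N => Q)]
    simp [hq1]
  have hEB1 : ∀ i : Fin N, ∑ v, P2 v * zz (v i) = 1 := fun i => by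
    rw [hP2def]
    rw [sum_prod_single Q zz hq1 i]
    exact hS
  have hEii : ∀ i : Fin N, ∑ v, P2 v * (zz (v i) * zz (v i)) = Ez := fun i => by
    rw [hP2def]
    rw [sum_prod_single Q (fun a => zz a * zz a) hq1 i]
    rw [hEzdef]
    exact Finset.sum_congr rfl fun a _ => by rw [← mul_assoc, hQz]
  have hpair : ∀ i j : Fin N, ∑ v, P2 v * (zz (v i) * zz (v j))
      = if i = j then Ez else 1 := by
    intro i j
    by_cases hij : i = j
    · subst hij; rw [if_pos rfl]; exact hEii i
    · rw [if_neg hij, hP2def, sum_prod_double Q zz hq1 hij, hS, one_pow]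
  have hEB : ∑ v, P2 v * B v = 1 := by
    calc ∑ v, P2 v * B v = (N : ℝ)⁻¹ * ∑ v, ∑ i, P2 v * zz (v i) := by
          simp only [hBdef, Finset.mul_sum]
          exact Finset.sum_congr rfl fun v _ => Finset.sum_congr rfl fun i _ => by ring
      _ = (N : ℝ)⁻¹ * ∑ i : Fin N, ∑ v, P2 v * zz (v i) := by rw [Finset.sum_comm]
      _ = (N : ℝ)⁻¹ * ∑ i : Fin N, (1:ℝ) := by
          congr 1; exact Finset.sum_congr rfl fun i _ => hEB1 i
      _ = 1 := by simp; field_simp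
  have hEB2 : ∑ v, P2 v * (B v) ^ 2 = (N:ℝ)⁻¹ * Ez + 1 - (N:ℝ)⁻¹ := by
    have expand : ∀ v, P2 v * (B v) ^ 2
        = ((N:ℝ)⁻¹)^2 * ∑ i, ∑ j, P2 v * (zz (v i) * zz (v j)) := by
      intro v
      have hsq : (∑ i, zz (v i)) ^ 2 = ∑ i, ∑ j, zz (v i) * zz (v j) := by
        rw [sq, Finset.sum_mul_sum]
      calc P2 v * (B v) ^ 2 = ((N:ℝ)⁻¹)^2 * (P2 v * ∑ i, ∑ j, zz (v i) * zz (v j)) := by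
            rw [hBdef]; simp only; rw [mul_pow, hsq]; ring
        _ = ((N:ℝ)⁻¹)^2 * ∑ i, ∑ j, P2 v * (zz (v i) * zz (v j)) := by
            congr 1
            rw [Finset.mul_sum]
            exact Finset.sum_congr rfl fun i _ => Finset.mul_sum _ _ _
    calc ∑ v, P2 v * (B v) ^ 2
        = ((N:ℝ)⁻¹)^2 * ∑ v, ∑ i : Fin N, ∑ j : Fin N, P2 v * (zz (v i) * zz (v j)) := by
          rw [Finset.mul_sum]; exact Finset.sum_congr rfl fun v _ => expand v
      _ = ((N:ℝ)⁻¹)^2 * ∑ i : Fin N, ∑ j : Fin N, ∑ v, P2 v * (zz (v i) * zz (v j)) := by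
          congr 1
          rw [Finset.sum_comm]
          exact Finset.sum_congr rfl fun i _ => Finset.sum_comm
      _ = ((N:ℝ)⁻¹)^2 * ∑ i : Fin N, ∑ j : Fin N, (if i = j then Ez else 1) := by
          congr 1
          exact Finset.sum_congr rfl fun i _ => Finset.sum_congr rfl fun j _ => hpair i j
      _ = ((N:ℝ)⁻¹)^2 * ∑ i : Fin N, ((Ez - 1) + (N:ℝ)) := by
          congr 1
          refine Finset.sum_congr rfl fun i _ => ?_
          calc ∑ j : Fin N, (if i = j then Ez else 1)
              = ∑ j : Fin N, ((if i = j then Ez - 1 else 0) + 1) :=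
                Finset.sum_congr rfl fun j _ => by split <;> ring
            _ = (Ez - 1) + (N:ℝ) := by
                rw [Finset.sum_add_distrib, Finset.sum_ite_eq]
                simp
      _ = (N:ℝ)⁻¹ * Ez + 1 - (N:ℝ)⁻¹ := by
          rw [Finset.sum_const, Finset.card_univ, Fintype.card_fin, nsmul_eq_mul]
          field_simp
          ring
  set EA : ℝ := ∑ u, P1 u * A u with hEAdef
  set EA2 : ℝ := ∑ u, P1 u * (A u) ^ 2 with hEA2def
  have hvarA : EA ^ 2 ≤ EA2 := by
    have h0 : 0 ≤ ∑ u, P1 u * (A u - EA) ^ 2 :=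
      Finset.sum_nonneg fun u _ => mul_nonneg (hP1nn u) (sq_nonneg _)
    have hexp : ∑ u, P1 u * (A u - EA) ^ 2 = EA2 - 2 * EA * EA + EA ^ 2 := by
      calc ∑ u, P1 u * (A u - EA) ^ 2
          = ∑ u, (P1 u * (A u) ^ 2 - 2 * EA * (P1 u * A u) + EA ^ 2 * P1 u) :=
            Finset.sum_congr rfl fun u _ => by ring
        _ = EA2 - 2 * EA * EA + EA ^ 2 := by
            rw [Finset.sum_add_distrib, Finset.sum_sub_distrib,
              ← Finset.mul_sum, ← Finset.mul_sum, hSP1, ← hEAdef, ← hEA2def]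
            ring
    nlinarith
  have h1 : ∑ s, P s * T s = EA - 1 := by
    rw [Fintype.sum_prod_type]
    calc ∑ u, ∑ v, P (u, v) * T (u, v)
        = ∑ u, ∑ v, (P1 u * P2 v) * (A u - B v) := by
          exact Finset.sum_congr rfl fun u _ => Finset.sum_congr rfl fun v _ => by
            rw [hPprod (u, v), hTAB (u, v)]
      _ = ∑ u, (P1 u * A u * (∑ v, P2 v) - P1 u * (∑ v, P2 v * B v)) := by
          refine Finset.sum_congr rfl fun u _ => ?_
          rw [Finset.mul_sum, Finset.mul_sum, ← Finset.sum_sub_distrib]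
          exact Finset.sum_congr rfl fun v _ => by ring
      _ = EA - 1 := by
          rw [hSP2, hEB]
          simp only [mul_one]
          rw [Finset.sum_sub_distrib, hSP1, ← hEAdef]
  have h2' : ∑ s, P s * T s ^ 2 = EA2 - 2 * EA + ((N:ℝ)⁻¹ * Ez + 1 - (N:ℝ)⁻¹) := by
    rw [Fintype.sum_prod_type]
    calc ∑ u, ∑ v, P (u, v) * T (u, v) ^ 2
        = ∑ u, ∑ v, (P1 u * P2 v) * (A u - B v) ^ 2 := by
          exact Finset.sum_congr rfl fun u _ => Finset.sum_congr rfl fun v _ => by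
            rw [hPprod (u, v), hTAB (u, v)]
      _ = ∑ u, (P1 u * (A u) ^ 2 * (∑ v, P2 v) - 2 * (P1 u * A u) * (∑ v, P2 v * B v)
            + P1 u * (∑ v, P2 v * (B v) ^ 2)) := by
          refine Finset.sum_congr rfl fun u _ => ?_
          rw [Finset.mul_sum, Finset.mul_sum, Finset.mul_sum, ← Finset.sum_sub_distrib,
            ← Finset.sum_add_distrib]
          exact Finset.sum_congr rfl fun v _ => by ring
      _ = EA2 - 2 * EA + ((N:ℝ)⁻¹ * Ez + 1 - (N:ℝ)⁻¹) := by
          rw [hSP2, hEB, hEB2]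
          simp only [mul_one]
          rw [Finset.sum_add_distrib, Finset.sum_sub_distrib, ← Finset.mul_sum,
            ← Finset.sum_mul, ← hEA2def, ← hEAdef, hSP1]
          ring
  rw [h1, h2']
  have hkey : (Real.exp I - 1) / N ≤ (Ez - 1) * (N:ℝ)⁻¹ := by
    rw [div_eq_mul_inv]
    have := inv_pos.2 hn
    nlinarith [sub_nonneg.2 hJensen]
  nlinarith [hvarA, hkey]
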